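/- arXiv:math/0409348 — 3 statements merged into one kernel-verified Lean document; each statement's English description precedes it below -/
import Mathlib

section
/- For any parameters a₁,…,a₅ ∈ ℂ, the polynomial S = P − U_{a₁,…,a₅} is invariant under the dihedral group D₇ acting on the (x,y)-coordinates: for all x, y, z, w ∈ ℂ one has S(cos(2π/7)·x − sin(2π/7)·y, sin(2π/7)·x + cos(2π/7)·y, z, w) = S(x, y, z, w) and S(x, −y, z, w) = S(x, y, z, w). -/
/-- For any a₁,…,a₅ ∈ ℂ, the septic S = P − U is invariant under
the dihedral group D₇ acting on the (x,y)-coordinates: invariance under the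
rotation by 2π/7 and under the reflection y ↦ −y. -/
theorem septic_family_dihedral_invariance (a₁ a₂ a₃ a₄ a₅ : ℂ) :
    ∀ x y z w : ℂ,
      (let c : ℂ := (Real.cos (2 * Real.pi / 7) : ℝ)
       let s : ℂ := (Real.sin (2 * Real.pi / 7) : ℝ)
       let P : ℂ → ℂ → ℂ → ℂ := fun x y z =>
         x * (x ^ 6 - 21 * x ^ 4 * y ^ 2 + 35 * x ^ 2 * y ^ 4 - 7 * y ^ 6)
           + 7 * z * ((x ^ 2 + y ^ 2) ^ 3 - 8 * z ^ 2 * (x ^ 2 + y ^ 2) ^ 2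
               + 16 * z ^ 4 * (x ^ 2 + y ^ 2))
           - 64 * z ^ 7
       let U : ℂ → ℂ → ℂ → ℂ → ℂ := fun x y z w =>
         (z + a₅ * w) * (a₁ * z ^ 3 + a₂ * z ^ 2 * w + a₃ * z * w ^ 2
             + a₄ * w ^ 3 + (z + w) * (x ^ 2 + y ^ 2)) ^ 2
       let S : ℂ → ℂ → ℂ → ℂ → ℂ := fun x y z w => P x y z - U x y z w
       S (c * x - s * y) (s * x + c * y) z w = S x y z w ∧
         S x (-y) z w = S x y z w) := by
  intro x y z w
  set θ : ℝ := 2 * Real.pi / 7 with hθ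
  have h7θ : (7 : ℝ) * θ = 2 * Real.pi := by rw [hθ]; ring
  have h1r : Real.cos θ ^ 7 - 21 * Real.cos θ ^ 5 * Real.sin θ ^ 2
      + 35 * Real.cos θ ^ 3 * Real.sin θ ^ 4 - 7 * Real.cos θ * Real.sin θ ^ 6 = 1 := by
    have : Real.cos ((7 : ℝ) * θ) = 1 := by rw [h7θ, Real.cos_two_pi]
    rw [show (7 : ℝ) * θ = θ + θ + θ + θ + θ + θ + θ from by ring] at this
    simp only [Real.cos_add, Real.sin_add] at this
    linear_combination this
  have h2r : 7 * Real.cos θ ^ 6 * Real.sin θ - 35 * Real.cos θ ^ 4 * Real.sin θ ^ 3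
      + 21 * Real.cos θ ^ 2 * Real.sin θ ^ 5 - Real.sin θ ^ 7 = 0 := by
    have : Real.sin ((7 : ℝ) * θ) = 0 := by rw [h7θ, Real.sin_two_pi]
    rw [show (7 : ℝ) * θ = θ + θ + θ + θ + θ + θ + θ from by ring] at this
    simp only [Real.cos_add, Real.sin_add] at this
    linear_combination this
  have hcsr : Real.cos θ ^ 2 + Real.sin θ ^ 2 = 1 := by
    rw [add_comm]; exact Real.sin_sq_add_cos_sq θ
  set c : ℂ := (Real.cos θ : ℂ) with hc
  set s : ℂ := (Real.sin θ : ℂ) with hs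
  have h1 : c ^ 7 - 21 * c ^ 5 * s ^ 2 + 35 * c ^ 3 * s ^ 4 - 7 * c * s ^ 6 = 1 := by
    rw [hc, hs]; exact_mod_cast congrArg (Complex.ofReal) h1r
  have h2 : 7 * c ^ 6 * s - 35 * c ^ 4 * s ^ 3 + 21 * c ^ 2 * s ^ 5 - s ^ 7 = 0 := by
    rw [hc, hs]; exact_mod_cast congrArg (Complex.ofReal) h2r
  have hcs : c ^ 2 + s ^ 2 = 1 := by
    rw [hc, hs]; exact_mod_cast congrArg (Complex.ofReal) hcsr
  have hq : (c * x - s * y) ^ 2 + (s * x + c * y) ^ 2 = x ^ 2 + y ^ 2 := by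
    linear_combination (x ^ 2 + y ^ 2) * hcs
  have hf : (c * x - s * y) * ((c * x - s * y) ^ 6 - 21 * (c * x - s * y) ^ 4 * (s * x + c * y) ^ 2
      + 35 * (c * x - s * y) ^ 2 * (s * x + c * y) ^ 4 - 7 * (s * x + c * y) ^ 6)
      = x * (x ^ 6 - 21 * x ^ 4 * y ^ 2 + 35 * x ^ 2 * y ^ 4 - 7 * y ^ 6) := by
    linear_combination (x ^ 7 - 21 * x ^ 5 * y ^ 2 + 35 * x ^ 3 * y ^ 4 - 7 * x * y ^ 6) * h1
      - (7 * x ^ 6 * y - 35 * x ^ 4 * y ^ 3 + 21 * x ^ 2 * y ^ 5 - y ^ 7) * h2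
  constructor
  · simp only
    rw [hq, hf]
  · simp only
    ring
end

section
/- Let ρ ∈ ℂ satisfy ρ³ + 4ρ² − 4ρ − 8 = 0. Then in ℂ[x,z] one has the factorization 16·(x⁷ + 7x⁶z − 56x⁴z³ + 112x²z⁵ − 64z⁷) = (x − z)·(x − ρz)²·(2x + (ρ² + 4ρ)z)²·(2x + (−ρ² − 2ρ + 8)z)²; equivalently this identity holds for all x, z ∈ ℂ. -/
/-- If ρ³ + 4ρ² − 4ρ − 8 = 0 then for all x, z ∈ ℂ,
`16·(x⁷ + 7x⁶z − 56x⁴z³ + 112x²z⁵ − 64z⁷)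
  = (x − z)·(x − ρz)²·(2x + (ρ² + 4ρ)z)²·(2x + (−ρ² − 2ρ + 8)z)²`. -/
theorem septic_plane_restriction_factorization (ρ : ℂ)
    (hρ : ρ ^ 3 + 4 * ρ ^ 2 - 4 * ρ - 8 = 0) :
    ∀ x z : ℂ,
      16 * (x ^ 7 + 7 * x ^ 6 * z - 56 * x ^ 4 * z ^ 3 + 112 * x ^ 2 * z ^ 5
          - 64 * z ^ 7)
        = (x - z) * (x - ρ * z) ^ 2 * (2 * x + (ρ ^ 2 + 4 * ρ) * z) ^ 2
            * (2 * x + (-ρ ^ 2 - 2 * ρ + 8) * z) ^ 2 := by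
  intro x z
  linear_combination ((128)*z^7 + (-224)*x^2*z^5 + (80)*x^4*z^3 + (16)*x^5*z^2
    + (-64)*ρ^1*z^7 + (112)*ρ^1*x^2*z^5 + (-64)*ρ^1*x^3*z^4 + (8)*ρ^1*x^4*z^3
    + (8)*ρ^1*x^5*z^2 + (96)*ρ^2*z^7 + (-72)*ρ^2*x^2*z^5 + (-16)*ρ^2*x^3*z^4
    + (-8)*ρ^2*x^4*z^3 + (-64)*ρ^3*z^7 + (128)*ρ^3*x^1*z^6 + (-48)*ρ^3*x^2*z^5
    + (-16)*ρ^3*x^3*z^4 + (-56)*ρ^4*z^7 + (32)*ρ^4*x^1*z^6 + (32)*ρ^4*x^2*z^5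
    + (-8)*ρ^4*x^3*z^4 + (8)*ρ^5*z^7 + (-24)*ρ^5*x^1*z^6 + (17)*ρ^5*x^2*z^5
    + (-1)*ρ^5*x^3*z^4 + (8)*ρ^6*z^7 + (-10)*ρ^6*x^1*z^6 + (2)*ρ^6*x^2*z^5
    + (1)*ρ^7*z^7 + (-1)*ρ^7*x^1*z^6) * hρ
end

section
/- Let α ∈ ℂ satisfy 7α³ + 7α + 1 = 0 and let S_α := P − U_{a₁,…,a₅} with a₁ := −(12/7)α² − (384/49)α − 8/7, a₂ := −(32/7)α² + (24/49)α − 4, a₃ := −4α² + (24/49)α − 4, a₄ := −(8/7)α² + (8/49)α − 8/7, a₅ := 49α² − 7α + 50. Then 1 + α² ≠ 0, and the linear form (1 + α²)·(z + w) − x divides the plane septic S_α(x, 0, z, w) in the polynomial ring ℂ[x, z, w]; that is, the restriction of S_α to the plane {y = 0} splits as a line S_{y,1}: z − x/(1+α²) + w = 0 times a sextic curve S_{y,6}. -/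
open MvPolynomial

/-- The septic `P(x,y,z,w)` (variables `X 0 = x, X 1 = y, X 2 = z, X 3 = w`). -/
noncomputable def Psept : MvPolynomial (Fin 4) ℂ :=
  X 0 * ((X 0) ^ 6 - 21 * (X 0) ^ 4 * (X 1) ^ 2 + 35 * (X 0) ^ 2 * (X 1) ^ 4
      - 7 * (X 1) ^ 6)
    + 7 * X 2 * (((X 0) ^ 2 + (X 1) ^ 2) ^ 3
        - 8 * (X 2) ^ 2 * ((X 0) ^ 2 + (X 1) ^ 2) ^ 2
        + 16 * (X 2) ^ 4 * ((X 0) ^ 2 + (X 1) ^ 2))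
    - 64 * (X 2) ^ 7

/-- `U_{a₁,…,a₅}(x,y,z,w) = (z + a₅w)(a₁z³ + a₂z²w + a₃zw² + a₄w³ + (z+w)(x²+y²))²`. -/
noncomputable def Usept (a₁ a₂ a₃ a₄ a₅ : ℂ) : MvPolynomial (Fin 4) ℂ :=
  (X 2 + C a₅ * X 3) *
    (C a₁ * (X 2) ^ 3 + C a₂ * (X 2) ^ 2 * X 3 + C a₃ * X 2 * (X 3) ^ 2
        + C a₄ * (X 3) ^ 3 + (X 2 + X 3) * ((X 0) ^ 2 + (X 1) ^ 2)) ^ 2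

set_option maxHeartbeats 4000000 in
set_option maxRecDepth 100000 in
/-- For α with 7α³ + 7α + 1 = 0 and the parameters of the theorem,
one has 1 + α² ≠ 0 and the linear form (1 + α²)·(z + w) − x divides the plane
septic S_α(x, 0, z, w) in ℂ[x, z, w] (variables `X 0 = x, X 1 = z, X 2 = w`);
i.e. the restriction of S_α to {y = 0} splits off the line z − x/(1+α²) + w = 0. -/
theorem septic_plane_restriction_splits (α : ℂ) (hα : 7 * α ^ 3 + 7 * α + 1 = 0)
    (a₁ a₂ a₃ a₄ a₅ : ℂ)
    (ha₁ : a₁ = -(12 / 7) * α ^ 2 - (384 / 49) * α - 8 / 7)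
    (ha₂ : a₂ = -(32 / 7) * α ^ 2 + (24 / 49) * α - 4)
    (ha₃ : a₃ = -4 * α ^ 2 + (24 / 49) * α - 4)
    (ha₄ : a₄ = -(8 / 7) * α ^ 2 + (8 / 49) * α - 8 / 7)
    (ha₅ : a₅ = 49 * α ^ 2 - 7 * α + 50)
    (S : MvPolynomial (Fin 4) ℂ) (hS : S = Psept - Usept a₁ a₂ a₃ a₄ a₅)
    (Sy : MvPolynomial (Fin 3) ℂ)
    (hSy : Sy = aeval (![X 0, 0, X 1, X 2] : Fin 4 → MvPolynomial (Fin 3) ℂ) S) :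
    1 + α ^ 2 ≠ 0 ∧
      (C (1 + α ^ 2) * (X 1 + X 2) - X 0 : MvPolynomial (Fin 3) ℂ) ∣ Sy := by
  constructor
  · intro h
    exact one_ne_zero (α := ℂ) (by linear_combination hα - 7 * α * h)
  · refine ⟨(C ((-1) : ℂ)*X (0:Fin 3)^6 + C ((-1)*α^2 + (-8) : ℂ)*X (0:Fin 3)^5*X (1:Fin 3) + C ((-1)*α^2 + (-1) : ℂ)*X (0:Fin 3)^5*X (2:Fin 3) + C ((-1)*α^4 + (-9)*α^2 + (-8) : ℂ)*X (0:Fin 3)^4*X (1:Fin 3)^2 + C ((-2)*α^4 + (-11)*α^2 + (-9) : ℂ)*X (0:Fin 3)^4*X (1:Fin 3)*X (2:Fin 3) + C ((-1)*α^4 + (-2)*α^2 + (-1) : ℂ)*X (0:Fin 3)^4*X (2:Fin 3)^2 + C ((-1)*α^6 + (-10)*α^4 + (-17)*α^2 + 49 : ℂ)*X (0:Fin 3)^3*X (1:Fin 3)^3 + C ((-3)*α^6 + (-23)*α^4 + 12*α^2 + (-7)*α + 35 : ℂ)*X (0:Fin 3)^3*X (1:Fin 3)^2*X (2:Fin 3)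 + C ((-3)*α^6 + (-16)*α^4 + 75*α^2 + (-14)*α + 91 : ℂ)*X (0:Fin 3)^3*X (1:Fin 3)*X (2:Fin 3)^2 + C ((-1)*α^6 + (-3)*α^4 + 46*α^2 + (-7)*α + 49 : ℂ)*X (0:Fin 3)^3*X (2:Fin 3)^3 + C ((-1)*α^8 + (-11)*α^6 + (-27)*α^4 + 32*α^2 + 49 : ℂ)*X (0:Fin 3)^2*X (1:Fin 3)^4 + C ((-4)*α^8 + (-37)*α^6 + (-38)*α^4 + (-7)*α^3 + 79*α^2 + (-7)*α + 84 : ℂ)*X (0:Fin 3)^2*X (1:Fin 3)^3*X (2:Fin 3) + C ((-6)*α^8 + (-45)*α^6 + 48*α^4 + (-21)*α^3 + 213*α^2 + (-21)*α + 126 : ℂ)*X (0:Fin 3)^2*X (1:Fin 3)^2*X (2:Fin 3)^2 + C ((-4)*α^8 + (-23)*α^6 + 102*α^4 + (-21)*α^3 + 261*α^2 + (-21)*α + 140 : ℂ)*X (0:Fin 3)^2*X (1:Fin 3)*X (2:Fin 3)^3 + C ((-1)*α^8 + (-4)*α^6 + 43*α^4 + (-7)*α^3 + 95*α^2 + (-7)*α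 + 49 : ℂ)*X (0:Fin 3)^2*X (2:Fin 3)^4 + C ((-1)*α^10 + (-12)*α^8 + (-38)*α^6 + 5*α^4 + (543/7)*α^2 + (-(768/49))*α + (-(457/7)) : ℂ)*X (0:Fin 3)*X (1:Fin 3)^5 + C ((-5)*α^10 + (-53)*α^8 + (-113)*α^6 + (-7)*α^5 + (-122)*α^4 + (-758)*α^3 + (404/7)*α^2 + (-(38679/49))*α + (59/7) : ℂ)*X (0:Fin 3)*X (1:Fin 3)^4*X (2:Fin 3) + C ((-10)*α^10 + (-92)*α^8 + (-72)*α^6 + (-28)*α^5 + (-314)*α^4 + (-688)*α^3 + (-(3814/7))*α^2 + (-(33748/49))*α + (-(2242/7)) : ℂ)*X (0:Fin 3)*X (1:Fin 3)^3*X (2:Fin 3)^2 + C ((-10)*α^10 + (-78)*α^8 + 82*α^6 + (-42)*α^5 + (-216)*α^4 + 132*α^3 + (-(6476/7))*α^2 + (8294/49)*α + (-(3810/7)) : ℂ)*X (0:Fin 3)*X (1:Fin 3)^2*X (2:Fin 3)^3 + C ((-5)*α^10 + (-32)*α^8 + 118*α^6 + (-28)*α^5 + (-3)*α^4 + 80*α^3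 + (-(3393/7))*α^2 + (5372/49)*α + (-(2293/7)) : ℂ)*X (0:Fin 3)*X (1:Fin 3)*X (2:Fin 3)^4 + C ((-1)*α^10 + (-5)*α^8 + 39*α^6 + (-7)*α^5 + 26*α^4 + 18*α^3 + (-(592/7))*α^2 + (1241/49)*α + (-(457/7)) : ℂ)*X (0:Fin 3)*X (2:Fin 3)^5 + C ((-1)*α^12 + (-13)*α^10 + (-50)*α^8 + (-33)*α^6 + (578/7)*α^4 + (-(768/49))*α^3 + (86/7)*α^2 + (-(768/49))*α + (-(457/7)) : ℂ)*X (1:Fin 3)^6 + C ((-6)*α^12 + (-71)*α^10 + (-216)*α^8 + (-7)*α^7 + (-268)*α^6 + (-765)*α^5 + (128/7)*α^4 + (-(76589/49))*α^3 + (549/7)*α^2 + (-(39447/49))*α + (-(398/7)) : ℂ)*X (1:Fin 3)^5*X (2:Fin 3) + C ((-15)*α^12 + (-160)*α^10 + (-330)*α^8 + (-35)*α^7 + (-621)*α^6 + (-1481)*α^5 + (-(6462/7))*α^4 + (-(143281/49))*α^3 + (-799)*α^2 + (-(72427/49))*α + (-(2183/7)) : ℂ)*X (1:Fin 3)^4*X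 (2:Fin 3)^2 + C ((-20)*α^12 + (-190)*α^10 + (-160)*α^8 + (-70)*α^7 + (-520)*α^6 + (-626)*α^5 + (-2000)*α^4 + (-(52698/49))*α^3 + (-(16342/7))*α^2 + (-(25454/49))*α + (-(6052/7)) : ℂ)*X (1:Fin 3)^3*X (2:Fin 3)^3 + C ((-15)*α^12 + (-125)*α^10 + 90*α^8 + (-70)*α^7 + (-19)*α^6 + 142*α^5 + (-(11402/7))*α^4 + (24054/49)*α^3 + (-(15972/7))*α^2 + (13666/49)*α + (-(6103/7)) : ℂ)*X (1:Fin 3)^2*X (2:Fin 3)^4 + C ((-6)*α^12 + (-43)*α^10 + 120*α^8 + (-35)*α^7 + 180*α^6 + 63*α^5 + (-(3824/7))*α^4 + (11415/49)*α^3 + (-(6735/7))*α^2 + (6613/49)*α + (-(2750/7)) : ℂ)*X (1:Fin 3)*X (2:Fin 3)^5 + C ((-1)*α^12 + (-6)*α^10 + 34*α^8 + (-7)*α^7 + 65*α^6 + 11*α^5 + (-(410/7))*α^4 + (2123/49)*α^3 + (-(1049/7))*α^2 + (1241/49)*α + (-(457/7)) : ℂ)*X (2:Fin 3)^6 : MvPolynomial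 (Fin 3) ℂ), ?_⟩
    apply MvPolynomial.funext
    intro p
    subst hSy hS ha₁ ha₂ ha₃ ha₄ ha₅
    simp only [Psept, Usept, map_sub, map_add, map_mul, map_pow, map_ofNat,
      map_one, map_zero, aeval_X, aeval_C, MvPolynomial.algebraMap_eq,
      eval_X, eval_C, eval_zero,
      Matrix.cons_val_zero, Matrix.cons_val_one, Matrix.head_cons,
      Matrix.cons_val_two, Matrix.tail_cons, Matrix.cons_val_three]
    linear_combination ((1/7)*(p 1)^7*α^11 + (13/7)*(p 1)^7*α^9 + (-(1/49))*(p 1)^7*α^8 + (50/7)*(p 1)^7*α^7 + (-(12/49))*(p 1)^7*α^6 + (1618/343)*(p 1)^7*α^5 + (-(38/49))*(p 1)^7*α^4 + (-(4035/343))*(p 1)^7*α^3 + (5620/2401)*(p 1)^7*α^2 + (-(719/343))*(p 1)^7*α + (-(1/49))*(p 1)^7 + 1*(p 1)^6*(p 2)*α^11 + 12*(p 1)^6*(p 2)*α^9 + (-(1/7))*(p 1)^6*(p 2)*α^8 + 38*(p 1)^6*(p 2)*α^7 + (-(4/7))*(p 1)^6*(p 2)*α^6 + (2108/49)*(p 1)^6*(p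 2)*α^5 + (738/7)*(p 1)^6*(p 2)*α^4 + (-(1711/49))*(p 1)^6*(p 2)*α^3 + (13068/343)*(p 1)^6*(p 2)*α^2 + (-(158192/343))*(p 1)^6*(p 2)*α + (2337/49)*(p 1)^6*(p 2) + 3*(p 1)^5*(p 2)^2*α^11 + 33*(p 1)^5*(p 2)^2*α^9 + (-(3/7))*(p 1)^5*(p 2)^2*α^8 + 78*(p 1)^5*(p 2)^2*α^7 + (12/7)*(p 1)^5*(p 2)^2*α^6 + (6226/49)*(p 1)^5*(p 2)^2*α^5 + 314*(p 1)^5*(p 2)^2*α^4 + (943/49)*(p 1)^5*(p 2)^2*α^3 + (53372/343)*(p 1)^5*(p 2)^2*α^2 + (1979/343)*(p 1)^5*(p 2)^2*α + (-(795/7))*(p 1)^5*(p 2)^2 + 5*(p 1)^4*(p 2)^3*α^11 + 50*(p 1)^4*(p 2)^3*α^9 + (-(5/7))*(p 1)^4*(p 2)^3*α^8 + 70*(p 1)^4*(p 2)^3*α^7 + (60/7)*(p 1)^4*(p 2)^3*α^6 + (7992/49)*(p 1)^4*(p 2)^3*α^5 + (2082/7)*(p 1)^4*(p 2)^3*α^4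 + (8525/49)*(p 1)^4*(p 2)^3*α^3 + (65340/343)*(p 1)^4*(p 2)^3*α^2 + (30306/343)*(p 1)^4*(p 2)^3*α + (-(5651/49))*(p 1)^4*(p 2)^3 + 5*(p 1)^3*(p 2)^4*α^11 + 45*(p 1)^3*(p 2)^4*α^9 + (-(5/7))*(p 1)^3*(p 2)^4*α^8 + 10*(p 1)^3*(p 2)^4*α^7 + (100/7)*(p 1)^3*(p 2)^4*α^6 + (3778/49)*(p 1)^3*(p 2)^4*α^5 + (514/7)*(p 1)^3*(p 2)^4*α^4 + (11409/49)*(p 1)^3*(p 2)^4*α^3 + (15780/343)*(p 1)^3*(p 2)^4*α^2 + (47799/343)*(p 1)^3*(p 2)^4*α + (-(947/49))*(p 1)^3*(p 2)^4 + 3*(p 1)^2*(p 2)^5*α^11 + 24*(p 1)^2*(p 2)^5*α^9 + (-(3/7))*(p 1)^2*(p 2)^5*α^8 + (-30)*(p 1)^2*(p 2)^5*α^7 + 12*(p 1)^2*(p 2)^5*α^6 + (-(1124/49))*(p 1)^2*(p 2)^5*α^5 + (-22)*(p 1)^2*(p 2)^5*α^4 + (6067/49)*(p 1)^2*(p 2)^5*α^3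 + (-(12092/343))*(p 1)^2*(p 2)^5*α^2 + (31820/343)*(p 1)^2*(p 2)^5*α + (-(11/7))*(p 1)^2*(p 2)^5 + 1*(p 1)*(p 2)^6*α^11 + 7*(p 1)*(p 2)^6*α^9 + (-(1/7))*(p 1)*(p 2)^6*α^8 + (-22)*(p 1)*(p 2)^6*α^7 + (36/7)*(p 1)*(p 2)^6*α^6 + (-(1714/49))*(p 1)*(p 2)^6*α^5 + (-(46/7))*(p 1)*(p 2)^6*α^4 + (1061/49)*(p 1)*(p 2)^6*α^3 + (-(4236/343))*(p 1)*(p 2)^6*α^2 + (9437/343)*(p 1)*(p 2)^6*α + (-(15/49))*(p 1)*(p 2)^6 + (1/7)*(p 2)^7*α^11 + (6/7)*(p 2)^7*α^9 + (-(1/49))*(p 2)^7*α^8 + (-(34/7))*(p 2)^7*α^7 + (44/49)*(p 2)^7*α^6 + (-(3184/343))*(p 2)^7*α^5 + (-(38/49))*(p 2)^7*α^4 + (-(311/343))*(p 2)^7*α^3 + (-(4180/2401))*(p 2)^7*α^2 + (898/343)*(p 2)^7*α + (-(1/49))*(p 2)^7) * hα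
end
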